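/- Let 0 < θ ≤ 2, let a⁰ = {a_j⁰}_{j≥0} ∈ l², b⁰ = {b_j⁰}_{j≥0} ∈ l², and let the forcing f satisfy ∑_{j≥0} λ_j^{-2} ∫₀ᵀ f_j²(t) dt < ∞. Then any two Leray-Hopf solutions on [0,T] of the dyadic MHD model with forward and backward energy cascade with initial data (a⁰, b⁰) and forcing f coincide on [0,T]. -/

import Mathlib

open Real MeasureTheory Set

noncomputable section

/-- `lamPow l j s = λ_j^s` where `λ_j = l^j`. -/
def lamPow (l : ℝ) (j : ℕ) (s : ℝ) : ℝ := (l ^ j : ℝ) ^ s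

/-- Value of a shell-indexed quantity at the previous index,
with the convention that the `(-1)`-st entry vanishes. -/
def dprev (x : ℕ → ℝ → ℝ) : ℕ → ℝ → ℝ
  | 0 => fun _ => 0
  | j + 1 => x j

/-- `(a, b)` is a weak solution on `[0,T]` of the dyadic MHD model with forward
and backward energy cascade (unit viscosity and resistivity), with forcing `f`:
`a_j' + λ_j² a_j + λ_j^θ a_j a_{j+1} − λ_{j-1}^θ a_{j-1}² − λ_j^θ b_j b_{j+1} + λ_{j-1}^θ b_{j-1}² = f_j`,
`b_j' + λ_j² b_j + λ_j^θ a_j b_{j+1} − λ_j^θ b_j a_{j+1} = 0`,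
with `a_j, b_j ∈ C¹([0,T])` and `a(t), b(t) ∈ l²` for each `t`. -/
def IsWeakSolutionFB (l θ T : ℝ) (f a b : ℕ → ℝ → ℝ) : Prop :=
  (∀ j, ContDiffOn ℝ 1 (a j) (Icc 0 T)) ∧
  (∀ j, ContDiffOn ℝ 1 (b j) (Icc 0 T)) ∧
  (∀ t ∈ Icc 0 T, Summable fun j => (a j t) ^ 2) ∧
  (∀ t ∈ Icc 0 T, Summable fun j => (b j t) ^ 2) ∧
  (∀ j, ∀ t ∈ Icc 0 T,
    derivWithin (a j) (Icc 0 T) t + lamPow l j 2 * a j t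
      + lamPow l j θ * a j t * a (j + 1) t
      - dprev (fun i t => lamPow l i θ * (a i t) ^ 2) j t
      - lamPow l j θ * b j t * b (j + 1) t
      + dprev (fun i t => lamPow l i θ * (b i t) ^ 2) j t = f j t) ∧
  (∀ j, ∀ t ∈ Icc 0 T,
    derivWithin (b j) (Icc 0 T) t + lamPow l j 2 * b j t
      + lamPow l j θ * a j t * b (j + 1) t
      - lamPow l j θ * b j t * a (j + 1) t = 0)

/-- `(a, b)` is a Leray-Hopf solution on `[0,T]` of the dyadic MHD model with
forward and backward energy cascade: a weak solution belonging to
`L^∞(0,T; l²) ∩ L²(0,T; H¹)` and satisfying the energy inequality. -/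
def IsLerayHopfFB (l θ T : ℝ) (f a b : ℕ → ℝ → ℝ) : Prop :=
  IsWeakSolutionFB l θ T f a b ∧
  (∃ M : ℝ, ∀ t ∈ Icc 0 T, (∑' j, (a j t) ^ 2) + (∑' j, (b j t) ^ 2) ≤ M) ∧
  Summable (fun j => ∫ t in (0:ℝ)..T, lamPow l j 2 * ((a j t) ^ 2 + (b j t) ^ 2)) ∧
  (∀ t ∈ Icc 0 T,
    (∑' j, ((a j t) ^ 2 + (b j t) ^ 2))
      + 2 * ∑' j, ∫ τ in (0:ℝ)..t, lamPow l j 2 * ((a j τ) ^ 2 + (b j τ) ^ 2)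
    ≤ (∑' j, ((a j 0) ^ 2 + (b j 0) ^ 2))
      + 2 * ∑' j, ∫ τ in (0:ℝ)..t, f j τ * a j τ)

open Topology Filter

/-! ### Auxiliary definitions for the uniqueness proof -/

def mhd_e (a b u v : ℕ → ℝ → ℝ) (j : ℕ) (τ : ℝ) : ℝ :=
  (a j τ - u j τ) ^ 2 + (b j τ - v j τ) ^ 2

def mhd_h (l : ℝ) (a b u v : ℕ → ℝ → ℝ) (j : ℕ) (τ : ℝ) : ℝ :=
  lamPow l j 2 * ((a j τ) ^ 2 + (b j τ) ^ 2 + (u j τ) ^ 2 + (v j τ) ^ 2)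

def mhd_AA (l θ : ℝ) (a b u v : ℕ → ℝ → ℝ) (j : ℕ) (τ : ℝ) : ℝ :=
  -(lamPow l j θ * ((a j τ - u j τ) * a (j+1) τ))
  - lamPow l j θ * (u j τ * (a (j+1) τ - u (j+1) τ))
  + (dprev (fun i t => lamPow l i θ * (a i t) ^ 2) j τ
      - dprev (fun i t => lamPow l i θ * (u i t) ^ 2) j τ)
  + lamPow l j θ * ((b j τ - v j τ) * b (j+1) τ)
  + lamPow l j θ * (v j τ * (b (j+1) τ - v (j+1) τ))
  - (dprev (fun i t => lamPow l i θ * (b i t) ^ 2) j τ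
      - dprev (fun i t => lamPow l i θ * (v i t) ^ 2) j τ)

def mhd_BB (l θ : ℝ) (a b u v : ℕ → ℝ → ℝ) (j : ℕ) (τ : ℝ) : ℝ :=
  -(lamPow l j θ * ((a j τ - u j τ) * b (j+1) τ))
  - lamPow l j θ * (u j τ * (b (j+1) τ - v (j+1) τ))
  + lamPow l j θ * ((b j τ - v j τ) * a (j+1) τ)
  + lamPow l j θ * (v j τ * (a (j+1) τ - u (j+1) τ))

def mhd_I (l θ : ℝ) (a b u v : ℕ → ℝ → ℝ) (j : ℕ) (τ : ℝ) : ℝ :=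
  -2 * lamPow l j 2 * mhd_e a b u v j τ
  + (2 * (a j τ - u j τ) * mhd_AA l θ a b u v j τ
     + 2 * (b j τ - v j τ) * mhd_BB l θ a b u v j τ)

def mhd_prev (c : ℕ → ℝ) : ℕ → ℝ
  | 0 => 0
  | j + 1 => c j

def mhd_trip (l : ℝ) (a b u v : ℕ → ℝ → ℝ) (j : ℕ) (τ : ℝ) : ℝ :=
  mhd_prev (fun i => mhd_h l a b u v i τ) j + mhd_h l a b u v j τ
    + mhd_h l a b u v (j+1) τ

/-! ### Elementary inequalities -/

lemma mhd_am2 (lam x A : ℝ) (hlam : 0 < lam) :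
    2 * x * A ≤ 2 * lam ^ 2 * x ^ 2 + A ^ 2 / (2 * lam ^ 2) := by
  rw [← sub_le_iff_le_add', le_div_iff₀ (by positivity)]
  nlinarith [sq_nonneg (2 * lam ^ 2 * x - A)]

lemma mhd_sq6 (t1 t2 t3 t4 t5 t6 : ℝ) :
    (t1 + t2 + t3 + t4 + t5 + t6) ^ 2 ≤ 6 * (t1^2 + t2^2 + t3^2 + t4^2 + t5^2 + t6^2) := by
  nlinarith [sq_nonneg (t1 - t2), sq_nonneg (t1 - t3), sq_nonneg (t1 - t4), sq_nonneg (t1 - t5),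
    sq_nonneg (t1 - t6), sq_nonneg (t2 - t3), sq_nonneg (t2 - t4), sq_nonneg (t2 - t5),
    sq_nonneg (t2 - t6), sq_nonneg (t3 - t4), sq_nonneg (t3 - t5), sq_nonneg (t3 - t6),
    sq_nonneg (t4 - t5), sq_nonneg (t4 - t6), sq_nonneg (t5 - t6)]

lemma mhd_sq4 (t1 t2 t3 t4 : ℝ) :
    (t1 + t2 + t3 + t4) ^ 2 ≤ 4 * (t1^2 + t2^2 + t3^2 + t4^2) := by
  nlinarith [sq_nonneg (t1 - t2), sq_nonneg (t1 - t3), sq_nonneg (t1 - t4),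
    sq_nonneg (t2 - t3), sq_nonneg (t2 - t4), sq_nonneg (t3 - t4)]

lemma mhd_two (x y : ℝ) : (x + y) ^ 2 ≤ 2 * x ^ 2 + 2 * y ^ 2 := by
  nlinarith [sq_nonneg (x - y)]

lemma mhd_two' (x y : ℝ) : (x - y) ^ 2 ≤ 2 * x ^ 2 + 2 * y ^ 2 := by
  nlinarith [sq_nonneg (x + y)]

lemma mhd_piece (mu L1 L2 g x Sb : ℝ) (h0 : 0 ≤ mu) (h1 : mu ≤ L1) (h2 : mu ≤ L2)
    (hx : x ^ 2 ≤ Sb) : (mu * g * x) ^ 2 ≤ L1 * Sb * (L2 * g ^ 2) := by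
  have hmu2 : mu ^ 2 ≤ L1 * L2 := by nlinarith
  have hg : 0 ≤ g ^ 2 := sq_nonneg g
  have hx0 : 0 ≤ x ^ 2 := sq_nonneg x
  nlinarith [mul_le_mul hmu2 (mul_le_mul_of_nonneg_left hx hg) (by positivity) (by nlinarith)]

lemma mhd_shell (lamP lam lamN muP mu : ℝ)
    (hP1 : 1 ≤ lamP) (hPl : lamP ≤ lam) (hlN : lam ≤ lamN)
    (hmuP0 : 0 ≤ muP) (hmuP : muP ≤ lamP ^ 2) (hmu0 : 0 ≤ mu) (hmu : mu ≤ lam ^ 2)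
    (aP bP uP vP aj bj uj vj aN bN uN vN Sb : ℝ)
    (h1 : (aP - uP) ^ 2 ≤ Sb) (h2 : (bP - vP) ^ 2 ≤ Sb)
    (h3 : (aj - uj) ^ 2 ≤ Sb) (h4 : (bj - vj) ^ 2 ≤ Sb)
    (h5 : (aN - uN) ^ 2 ≤ Sb) (h6 : (bN - vN) ^ 2 ≤ Sb)
    (A B : ℝ)
    (hA : A = -(mu * ((aj - uj) * aN)) - mu * (uj * (aN - uN))
        + muP * ((aP - uP) * aP) + muP * ((aP - uP) * uP)
        + mu * ((bj - vj) * bN) + mu * (vj * (bN - vN))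
        - muP * ((bP - vP) * bP) - muP * ((bP - vP) * vP))
    (hB : B = -(mu * ((aj - uj) * bN)) - mu * (uj * (bN - vN))
        + mu * ((bj - vj) * aN) + mu * (vj * (aN - uN))) :
    |2 * (aj - uj) * A + 2 * (bj - vj) * B|
    ≤ 2 * lam ^ 2 * ((aj - uj) ^ 2 + (bj - vj) ^ 2)
      + 10 * Sb * (lamP ^ 2 * (aP ^ 2 + bP ^ 2 + uP ^ 2 + vP ^ 2)
        + lam ^ 2 * (aj ^ 2 + bj ^ 2 + uj ^ 2 + vj ^ 2)
        + lamN ^ 2 * (aN ^ 2 + bN ^ 2 + uN ^ 2 + vN ^ 2)) := by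
  have hlam0 : 0 < lam := lt_of_lt_of_le (by linarith) hPl
  have hSb0 : 0 ≤ Sb := le_trans (sq_nonneg _) h3
  have hlP0 : (0:ℝ) ≤ lamP := by linarith
  have hmuPlam : muP ≤ lam ^ 2 := le_trans hmuP (pow_le_pow_left₀ hlP0 hPl 2)
  obtain ⟨H, hH⟩ : ∃ H : ℝ, H = lamP ^ 2 * (aP ^ 2 + bP ^ 2 + uP ^ 2 + vP ^ 2)
        + lam ^ 2 * (aj ^ 2 + bj ^ 2 + uj ^ 2 + vj ^ 2)
        + lamN ^ 2 * (aN ^ 2 + bN ^ 2 + uN ^ 2 + vN ^ 2) := ⟨_, rfl⟩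
  have hllN2 : lam ^ 2 ≤ lamN ^ 2 := pow_le_pow_left₀ (le_of_lt hlam0) hlN 2
  have e1 : (mu * aN * (aj - uj)) ^ 2 ≤ lam ^ 2 * Sb * (lamN ^ 2 * aN ^ 2) :=
    mhd_piece _ _ _ _ _ _ hmu0 hmu (le_trans hmu hllN2) h3
  have e2 : (mu * uj * (aN - uN)) ^ 2 ≤ lam ^ 2 * Sb * (lam ^ 2 * uj ^ 2) :=
    mhd_piece _ _ _ _ _ _ hmu0 hmu hmu h5
  have e3 : (muP * (aP + uP) * (aP - uP)) ^ 2
      ≤ lam ^ 2 * Sb * (lamP ^ 2 * (aP + uP) ^ 2) :=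
    mhd_piece _ _ _ _ _ _ hmuP0 hmuPlam hmuP h1
  have e4 : (mu * bN * (bj - vj)) ^ 2 ≤ lam ^ 2 * Sb * (lamN ^ 2 * bN ^ 2) :=
    mhd_piece _ _ _ _ _ _ hmu0 hmu (le_trans hmu hllN2) h4
  have e5 : (mu * vj * (bN - vN)) ^ 2 ≤ lam ^ 2 * Sb * (lam ^ 2 * vj ^ 2) :=
    mhd_piece _ _ _ _ _ _ hmu0 hmu hmu h6
  have e6 : (muP * (bP + vP) * (bP - vP)) ^ 2
      ≤ lam ^ 2 * Sb * (lamP ^ 2 * (bP + vP) ^ 2) :=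
    mhd_piece _ _ _ _ _ _ hmuP0 hmuPlam hmuP h2
  have r1 : (mu * bN * (aj - uj)) ^ 2 ≤ lam ^ 2 * Sb * (lamN ^ 2 * bN ^ 2) :=
    mhd_piece _ _ _ _ _ _ hmu0 hmu (le_trans hmu hllN2) h3
  have r2 : (mu * uj * (bN - vN)) ^ 2 ≤ lam ^ 2 * Sb * (lam ^ 2 * uj ^ 2) :=
    mhd_piece _ _ _ _ _ _ hmu0 hmu hmu h6
  have r3 : (mu * aN * (bj - vj)) ^ 2 ≤ lam ^ 2 * Sb * (lamN ^ 2 * aN ^ 2) :=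
    mhd_piece _ _ _ _ _ _ hmu0 hmu (le_trans hmu hllN2) h4
  have r4 : (mu * vj * (aN - uN)) ^ 2 ≤ lam ^ 2 * Sb * (lam ^ 2 * vj ^ 2) :=
    mhd_piece _ _ _ _ _ _ hmu0 hmu hmu h5
  have hA2 : A ^ 2 ≤ 6 * ((mu * aN * (aj - uj)) ^ 2 + (mu * uj * (aN - uN)) ^ 2
      + (muP * (aP + uP) * (aP - uP)) ^ 2 + (mu * bN * (bj - vj)) ^ 2
      + (mu * vj * (bN - vN)) ^ 2 + (muP * (bP + vP) * (bP - vP)) ^ 2) := by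
    have e : A = (-(mu * aN * (aj - uj))) + (-(mu * uj * (aN - uN)))
        + (muP * (aP + uP) * (aP - uP)) + (mu * bN * (bj - vj))
        + (mu * vj * (bN - vN)) + (-(muP * (bP + vP) * (bP - vP))) := by rw [hA]; ring
    have := mhd_sq6 (-(mu * aN * (aj - uj))) (-(mu * uj * (aN - uN)))
        (muP * (aP + uP) * (aP - uP)) (mu * bN * (bj - vj))
        (mu * vj * (bN - vN)) (-(muP * (bP + vP) * (bP - vP)))
    rw [← e] at this
    calc A ^ 2 ≤ _ := this
    _ = 6 * ((mu * aN * (aj - uj)) ^ 2 + (mu * uj * (aN - uN)) ^ 2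
      + (muP * (aP + uP) * (aP - uP)) ^ 2 + (mu * bN * (bj - vj)) ^ 2
      + (mu * vj * (bN - vN)) ^ 2 + (muP * (bP + vP) * (bP - vP)) ^ 2) := by ring
  have hB2 : B ^ 2 ≤ 4 * ((mu * bN * (aj - uj)) ^ 2 + (mu * uj * (bN - vN)) ^ 2
      + (mu * aN * (bj - vj)) ^ 2 + (mu * vj * (aN - uN)) ^ 2) := by
    have e : B = (-(mu * bN * (aj - uj))) + (-(mu * uj * (bN - vN)))
        + (mu * aN * (bj - vj)) + (mu * vj * (aN - uN)) := by rw [hB]; ring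
    have := mhd_sq4 (-(mu * bN * (aj - uj))) (-(mu * uj * (bN - vN)))
        (mu * aN * (bj - vj)) (mu * vj * (aN - uN))
    rw [← e] at this
    calc B ^ 2 ≤ _ := this
    _ = 4 * ((mu * bN * (aj - uj)) ^ 2 + (mu * uj * (bN - vN)) ^ 2
      + (mu * aN * (bj - vj)) ^ 2 + (mu * vj * (aN - uN)) ^ 2) := by ring
  have hap : lamP ^ 2 * (aP + uP) ^ 2 ≤ lamP ^ 2 * (2 * aP ^ 2 + 2 * uP ^ 2) :=
    mul_le_mul_of_nonneg_left (mhd_two aP uP) (sq_nonneg lamP)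
  have hbp : lamP ^ 2 * (bP + vP) ^ 2 ≤ lamP ^ 2 * (2 * bP ^ 2 + 2 * vP ^ 2) :=
    mul_le_mul_of_nonneg_left (mhd_two bP vP) (sq_nonneg lamP)
  have nn : ∀ x y : ℝ, (0:ℝ) ≤ x ^ 2 * y ^ 2 := fun x y => by positivity
  have hXA : (lamN ^ 2 * aN ^ 2) + (lam ^ 2 * uj ^ 2) + (lamP ^ 2 * (aP + uP) ^ 2)
      + (lamN ^ 2 * bN ^ 2) + (lam ^ 2 * vj ^ 2) + (lamP ^ 2 * (bP + vP) ^ 2) ≤ 2 * H := by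
    rw [hH]
    linarith [hap, hbp, nn lam aj, nn lam bj, nn lam uj, nn lam vj,
      nn lamN aN, nn lamN bN, nn lamN uN, nn lamN vN]
  have hXB : (lamN ^ 2 * bN ^ 2) + (lam ^ 2 * uj ^ 2) + (lamN ^ 2 * aN ^ 2)
      + (lam ^ 2 * vj ^ 2) ≤ 2 * H := by
    rw [hH]
    linarith [nn lamP aP, nn lamP bP, nn lamP uP, nn lamP vP, nn lam aj, nn lam bj,
      nn lam uj, nn lam vj, nn lamN aN, nn lamN bN, nn lamN uN, nn lamN vN]
  have hlamSb : (0:ℝ) ≤ lam ^ 2 * Sb := by positivity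
  have mA := mul_le_mul_of_nonneg_left hXA hlamSb
  have mB := mul_le_mul_of_nonneg_left hXB hlamSb
  have hA2' : A ^ 2 ≤ 12 * (lam ^ 2 * Sb) * H := by linarith [hA2, e1, e2, e3, e4, e5, e6, mA]
  have hB2' : B ^ 2 ≤ 8 * (lam ^ 2 * Sb) * H := by linarith [hB2, r1, r2, r3, r4, mB]
  have d1 : 2 * (aj - uj) * A ≤ 2 * lam ^ 2 * (aj - uj) ^ 2 + A ^ 2 / (2 * lam ^ 2) :=
    mhd_am2 lam _ _ hlam0
  have d2 : 2 * (bj - vj) * B ≤ 2 * lam ^ 2 * (bj - vj) ^ 2 + B ^ 2 / (2 * lam ^ 2) :=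
    mhd_am2 lam _ _ hlam0
  have d1' : 2 * (aj - uj) * (-A) ≤ 2 * lam ^ 2 * (aj - uj) ^ 2 + (-A) ^ 2 / (2 * lam ^ 2) :=
    mhd_am2 lam _ _ hlam0
  have d2' : 2 * (bj - vj) * (-B) ≤ 2 * lam ^ 2 * (bj - vj) ^ 2 + (-B) ^ 2 / (2 * lam ^ 2) :=
    mhd_am2 lam _ _ hlam0
  norm_num at d1' d2'
  have hdiv : A ^ 2 / (2 * lam ^ 2) + B ^ 2 / (2 * lam ^ 2) ≤ 10 * Sb * H := by
    rw [← add_div, div_le_iff₀ (by positivity)]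
    calc A ^ 2 + B ^ 2 ≤ 20 * (lam ^ 2 * Sb) * H := by linarith
    _ = 10 * Sb * H * (2 * lam ^ 2) := by ring
  rw [← hH]
  rw [abs_le]
  constructor
  · linarith [d1', d2', hdiv]
  · linarith [d1, d2, hdiv]

/-! ### tsum helpers -/

lemma mhd_prev_summable {c : ℕ → ℝ} (hc : Summable c) : Summable (mhd_prev c) := by
  have : Summable (fun n => mhd_prev c (n + 1)) := hc
  exact (summable_nat_add_iff 1).1 this

lemma mhd_prev_tsum {c : ℕ → ℝ} (hc : Summable c) : ∑' j, mhd_prev c j = ∑' j, c j := by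
  rw [Summable.tsum_eq_zero_add (mhd_prev_summable hc)]
  simp [mhd_prev]

lemma mhd_succ_summable {c : ℕ → ℝ} (hc : Summable c) : Summable (fun j => c (j + 1)) :=
  (summable_nat_add_iff 1).2 hc

lemma mhd_succ_tsum_le {c : ℕ → ℝ} (hc : Summable c) (h0 : ∀ j, 0 ≤ c j) :
    ∑' j, c (j + 1) ≤ ∑' j, c j := by
  rw [Summable.tsum_eq_zero_add hc]
  linarith [h0 0]

lemma mhd_tsum_toReal (c : ℕ → ℝ) (hc : ∀ j, 0 ≤ c j) :
    ∑' j, c j = (∑' j, ENNReal.ofReal (c j)).toReal := by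
  by_cases h : Summable c
  · rw [← ENNReal.ofReal_tsum_of_nonneg hc h, ENNReal.toReal_ofReal (tsum_nonneg hc)]
  · rw [tsum_eq_zero_of_not_summable h]
    by_cases htop : (∑' j, ENNReal.ofReal (c j)) = ⊤
    · rw [htop]; simp
    · exfalso
      apply h
      have := ENNReal.summable_toReal htop
      refine this.congr fun j => ?_
      rw [ENNReal.toReal_ofReal (hc j)]

/-! ### Grönwall lemma -/

lemma mhd_gronwall (T : ℝ) (S g : ℝ → ℝ)
    (hg0 : ∀ τ, 0 ≤ g τ)
    (hS0 : ∀ t ∈ Icc (0:ℝ) T, 0 ≤ S t)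
    (hgi : IntegrableOn g (Ioc 0 T) volume)
    (hgSi : IntegrableOn (fun τ => g τ * S τ) (Ioc 0 T) volume)
    (hkey : ∀ t ∈ Icc (0:ℝ) T, S t ≤ ∫ τ in Ioc 0 t, g τ * S τ) :
    ∀ t ∈ Icc (0:ℝ) T, S t = 0 := by
  rcases le_or_gt T 0 with hT | hT
  · intro t ht
    have ht0 : t = 0 := le_antisymm (ht.2.trans hT) ht.1
    have h0T : (0:ℝ) ∈ Icc (0:ℝ) T := ⟨le_rfl, ht0 ▸ ht.1.trans ht.2⟩
    have := hkey 0 h0T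
    simp only [Ioc_self, Measure.restrict_empty, integral_zero_measure] at this
    rw [ht0]; exact le_antisymm this (hS0 0 h0T)
  set F : ℝ → ℝ := fun t => ∫ τ in Ioc 0 t, g τ * S τ with hF
  set Ψ : ℝ → ℝ := fun t => ∫ τ in Ioc 0 t, g τ with hΨ
  have hgS0 : ∀ τ ∈ Ioc (0:ℝ) T, 0 ≤ g τ * S τ := fun τ hτ =>
    mul_nonneg (hg0 τ) (hS0 τ ⟨hτ.1.le, hτ.2⟩)
  have hgSi' : ∀ s t : ℝ, 0 ≤ s → t ≤ T → IntegrableOn (fun τ => g τ * S τ) (Ioc s t) volume :=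
    fun s t hs htT => hgSi.mono_set (fun x hx => ⟨lt_of_le_of_lt hs hx.1, hx.2.trans htT⟩)
  have hgi' : ∀ s t : ℝ, 0 ≤ s → t ≤ T → IntegrableOn g (Ioc s t) volume :=
    fun s t hs htT => hgi.mono_set (fun x hx => ⟨lt_of_le_of_lt hs hx.1, hx.2.trans htT⟩)
  have hFadd : ∀ s t : ℝ, 0 ≤ s → s ≤ t → t ≤ T → F t = F s + ∫ τ in Ioc s t, g τ * S τ := by
    intro s t hs hst htT
    rw [hF]
    simp only
    rw [← Ioc_union_Ioc_eq_Ioc hs hst,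
      setIntegral_union (Ioc_disjoint_Ioc_of_le le_rfl) measurableSet_Ioc
        (hgSi' 0 s le_rfl (hst.trans htT)) (hgSi' s t hs htT)]
  have hΨadd : ∀ s t : ℝ, 0 ≤ s → s ≤ t → t ≤ T → Ψ t = Ψ s + ∫ τ in Ioc s t, g τ := by
    intro s t hs hst htT
    rw [hΨ]
    simp only
    rw [← Ioc_union_Ioc_eq_Ioc hs hst,
      setIntegral_union (Ioc_disjoint_Ioc_of_le le_rfl) measurableSet_Ioc
        (hgi' 0 s le_rfl (hst.trans htT)) (hgi' s t hs htT)]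
  have hF0 : ∀ t ∈ Icc (0:ℝ) T, 0 ≤ F t := by
    intro t ht
    exact setIntegral_nonneg measurableSet_Ioc fun τ hτ =>
      hgS0 τ ⟨hτ.1, hτ.2.trans ht.2⟩
  have hFmono : ∀ s t : ℝ, 0 ≤ s → s ≤ t → t ≤ T → F s ≤ F t := by
    intro s t hs hst htT
    rw [hFadd s t hs hst htT]
    have : 0 ≤ ∫ τ in Ioc s t, g τ * S τ :=
      setIntegral_nonneg measurableSet_Ioc fun τ hτ =>
        hgS0 τ ⟨lt_of_le_of_lt hs hτ.1, hτ.2.trans htT⟩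
    linarith
  have hSF : ∀ t ∈ Icc (0:ℝ) T, S t ≤ F t := hkey
  have hg0i : Integrable ((Ioc (0:ℝ) T).indicator g) volume :=
    (integrable_indicator_iff measurableSet_Ioc).2 hgi
  have hΨeq : ∀ t ∈ Icc (0:ℝ) T, Ψ t = ∫ x in (0:ℝ)..t, (Ioc (0:ℝ) T).indicator g x := by
    intro t ht
    have hsub : Ioc 0 t ∩ Ioc (0:ℝ) T = Ioc 0 t :=
      inter_eq_self_of_subset_left fun x hx => ⟨hx.1, hx.2.trans ht.2⟩
    rw [intervalIntegral.integral_of_le ht.1, setIntegral_indicator measurableSet_Ioc, hsub, hΨ]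
  have hΨcont : ContinuousOn Ψ (Icc (0:ℝ) T) := by
    have hc : Continuous fun t => ∫ x in (0:ℝ)..t, (Ioc (0:ℝ) T).indicator g x :=
      intervalIntegral.continuous_primitive (fun a b => hg0i.intervalIntegrable) 0
    exact (hc.continuousOn).congr hΨeq
  have hΨ00 : Ψ 0 = 0 := by rw [hΨ]; simp
  have hΨ0 : ∀ t ∈ Icc (0:ℝ) T, 0 ≤ Ψ t := by
    intro t ht
    exact setIntegral_nonneg measurableSet_Ioc fun τ hτ => hg0 τ
  have step : ∀ σ t : ℝ, 0 ≤ σ → σ ≤ t → t ≤ T → F σ ≤ 0 → Ψ t - Ψ σ ≤ 1/2 → F t ≤ 0 := by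
    intro σ t hσ hσt htT hFσ hΨhalf
    have htI : t ∈ Icc (0:ℝ) T := ⟨hσ.trans hσt, htT⟩
    have hFt0 : 0 ≤ F t := hF0 t htI
    have h1 : F t = F σ + ∫ τ in Ioc σ t, g τ * S τ := hFadd σ t hσ hσt htT
    have h2 : ∫ τ in Ioc σ t, g τ * S τ ≤ ∫ τ in Ioc σ t, g τ * F t := by
      apply setIntegral_mono_on (hgSi' σ t hσ htT)
        ((hgi' σ t hσ htT).mul_const (F t)) measurableSet_Ioc
      intro τ hτ
      have hτI : τ ∈ Icc (0:ℝ) T := ⟨(hσ.trans_lt hτ.1).le, hτ.2.trans htT⟩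
      have h' : S τ ≤ F τ := hSF τ hτI
      have h'' : S τ ≤ F t := h'.trans (hFmono τ t hτI.1 (hτ.2) htT)
      exact mul_le_mul_of_nonneg_left h'' (hg0 τ)
    have h3 : ∫ τ in Ioc σ t, g τ * F t = (Ψ t - Ψ σ) * F t := by
      rw [integral_mul_const]
      have := hΨadd σ t hσ hσt htT
      have h4 : ∫ τ in Ioc σ t, g τ = Ψ t - Ψ σ := by linarith
      rw [h4]
    have h5 : (Ψ t - Ψ σ) * F t ≤ (1/2) * F t :=
      mul_le_mul_of_nonneg_right hΨhalf hFt0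
    linarith
  have ind : ∀ n : ℕ, ∀ t ∈ Icc (0:ℝ) T, Ψ t ≤ n / 2 → F t ≤ 0 := by
    intro n
    induction n with
    | zero =>
      intro t ht hΨt
      have : Ψ t - Ψ 0 ≤ 1/2 := by rw [hΨ00]; push_cast at hΨt; linarith
      have hF00 : F 0 ≤ 0 := by rw [hF]; simp
      exact step 0 t le_rfl ht.1 ht.2 hF00 this
    | succ n IH =>
      intro t ht hΨt
      rcases le_or_gt (Ψ t) (n / 2) with h | h
      · exact IH t ht h
      have hmem : (n / 2 : ℝ) ∈ Icc (Ψ 0) (Ψ t) := by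
        rw [hΨ00]
        exact ⟨by positivity, h.le⟩
      have hsub : Icc (0:ℝ) t ⊆ Icc (0:ℝ) T := Icc_subset_Icc le_rfl ht.2
      obtain ⟨σ, hσI, hσΨ⟩ := intermediate_value_Icc ht.1 (hΨcont.mono hsub) hmem
      have hFσ : F σ ≤ 0 := IH σ ⟨hσI.1, hσI.2.trans ht.2⟩ (le_of_eq hσΨ)
      apply step σ t hσI.1 hσI.2 ht.2 hFσ
      rw [hσΨ]
      push_cast at hΨt
      linarith
  intro t ht
  obtain ⟨n, hn⟩ := exists_nat_ge (2 * Ψ T)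
  have hΨT : Ψ t ≤ Ψ T := by
    have := hΨadd t T ht.1 ht.2 le_rfl
    have h0 : 0 ≤ ∫ τ in Ioc t T, g τ :=
      setIntegral_nonneg measurableSet_Ioc fun τ hτ => hg0 τ
    linarith
  have hFt : F t ≤ 0 := ind n t ht (by push_cast; linarith)
  exact le_antisymm ((hSF t ht).trans hFt) (hS0 t ht)

/-! ### System-specific lemmas -/

section system

variable {l θ T : ℝ} {f a b u v : ℕ → ℝ → ℝ}

lemma mhd_lamPow_two (l : ℝ) (hl : 0 < l) (j : ℕ) : lamPow l j 2 = (l ^ j) ^ 2 := by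
  rw [lamPow, show (2:ℝ) = ((2:ℕ):ℝ) by norm_num, Real.rpow_natCast]

lemma mhd_lamPow_theta_nonneg (l θ : ℝ) (hl : 0 < l) (j : ℕ) : 0 ≤ lamPow l j θ :=
  Real.rpow_nonneg (pow_nonneg hl.le j) θ

lemma mhd_lamPow_theta_le (l θ : ℝ) (hl : 1 ≤ l) (hθ2 : θ ≤ 2) (j : ℕ) :
    lamPow l j θ ≤ (l ^ j) ^ 2 := by
  have h1 : (1:ℝ) ≤ l ^ j := one_le_pow₀ hl
  calc lamPow l j θ ≤ lamPow l j 2 := Real.rpow_le_rpow_of_exponent_le h1 hθ2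
  _ = (l ^ j) ^ 2 := mhd_lamPow_two l (by linarith) j

/-- Pointwise bound on the integrand. -/
lemma mhd_I_bound (hl : 1 < l) (hθ2 : θ ≤ 2) (j : ℕ) (τ : ℝ) (Sb : ℝ)
    (hsq : ∀ i, (a i τ - u i τ) ^ 2 ≤ Sb ∧ (b i τ - v i τ) ^ 2 ≤ Sb) :
    mhd_I l θ a b u v j τ ≤ 10 * Sb * mhd_trip l a b u v j τ ∧
    |mhd_I l θ a b u v j τ| ≤ 4 * lamPow l j 2 * mhd_e a b u v j τ
      + 10 * Sb * mhd_trip l a b u v j τ := by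
  have hl0 : (0:ℝ) < l := by linarith
  have hl1 : (1:ℝ) ≤ l := hl.le
  have hlam1 : ∀ i : ℕ, (1:ℝ) ≤ l ^ i := fun i => one_le_pow₀ hl1
  have hmono : ∀ i : ℕ, (l:ℝ) ^ i ≤ l ^ (i + 1) :=
    fun i => pow_le_pow_right₀ hl1 (Nat.le_succ i)
  have hmu0 := mhd_lamPow_theta_nonneg l θ hl0
  have hmu2 := mhd_lamPow_theta_le l θ hl1 hθ2
  have he0 : 0 ≤ mhd_e a b u v j τ := by
    simp only [mhd_e]; positivity
  have hlam20 : 0 ≤ lamPow l j 2 := by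
    rw [mhd_lamPow_two l hl0]; positivity
  have hprod : 0 ≤ lamPow l j 2 * mhd_e a b u v j τ := mul_nonneg hlam20 he0
  cases j with
  | zero =>
    have key := mhd_shell 1 (l ^ 0) (l ^ (0+1)) 0 (lamPow l 0 θ)
      le_rfl (by simp) (hmono 0) le_rfl (by norm_num) (hmu0 0) (hmu2 0)
      0 0 0 0 (a 0 τ) (b 0 τ) (u 0 τ) (v 0 τ)
      (a (0+1) τ) (b (0+1) τ) (u (0+1) τ) (v (0+1) τ) (Sb)
      (by simpa using (le_trans (sq_nonneg _) (hsq 0).1))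
      (by simpa using (le_trans (sq_nonneg _) (hsq 0).1))
      (hsq 0).1 (hsq 0).2 (hsq (0+1)).1 (hsq (0+1)).2
      (mhd_AA l θ a b u v 0 τ) (mhd_BB l θ a b u v 0 τ)
      (by simp only [mhd_AA, dprev]; all_goals ring)
      (by simp only [mhd_BB]; all_goals ring)
    have k1 := (abs_le.1 key).1
    have k2 := (abs_le.1 key).2
    constructor
    · simp only [mhd_I, mhd_trip, mhd_prev, mhd_h, mhd_e,
        mhd_lamPow_two l hl0] at *
      linarith [k2]
    · rw [abs_le]
      constructor
      · simp only [mhd_I, mhd_trip, mhd_prev, mhd_h, mhd_e,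
          mhd_lamPow_two l hl0] at *
        linarith [k1, hprod]
      · simp only [mhd_I, mhd_trip, mhd_prev, mhd_h, mhd_e,
          mhd_lamPow_two l hl0] at *
        linarith [k2, hprod]
  | succ k =>
    have key := mhd_shell (l ^ k) (l ^ (k+1)) (l ^ (k+1+1)) (lamPow l k θ) (lamPow l (k+1) θ)
      (hlam1 k) (hmono k) (hmono (k+1)) (hmu0 k) (hmu2 k) (hmu0 (k+1)) (hmu2 (k+1))
      (a k τ) (b k τ) (u k τ) (v k τ)
      (a (k+1) τ) (b (k+1) τ) (u (k+1) τ) (v (k+1) τ)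
      (a (k+1+1) τ) (b (k+1+1) τ) (u (k+1+1) τ) (v (k+1+1) τ) Sb
      (hsq k).1 (hsq k).2 (hsq (k+1)).1 (hsq (k+1)).2 (hsq (k+1+1)).1 (hsq (k+1+1)).2
      (mhd_AA l θ a b u v (k+1) τ) (mhd_BB l θ a b u v (k+1) τ)
      (by simp only [mhd_AA, dprev]; all_goals ring)
      (by simp only [mhd_BB]; all_goals ring)
    have k1 := (abs_le.1 key).1
    have k2 := (abs_le.1 key).2
    constructor
    · simp only [mhd_I, mhd_trip, mhd_prev, mhd_h, mhd_e,
        mhd_lamPow_two l hl0] at *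
      linarith [k2]
    · rw [abs_le]
      constructor
      · simp only [mhd_I, mhd_trip, mhd_prev, mhd_h, mhd_e,
          mhd_lamPow_two l hl0] at *
        linarith [k1, hprod]
      · simp only [mhd_I, mhd_trip, mhd_prev, mhd_h, mhd_e,
          mhd_lamPow_two l hl0] at *
        linarith [k2, hprod]

/-- Shell energy derivative identity. -/
lemma mhd_hasDerivAt (hwab : IsWeakSolutionFB l θ T f a b)
    (hwuv : IsWeakSolutionFB l θ T f u v) :
    ∀ j, ∀ x ∈ Ioo (0:ℝ) T, HasDerivAt (fun τ => mhd_e a b u v j τ)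
      (mhd_I l θ a b u v j x) x := by
  obtain ⟨haC, hbC, -, -, haE, hbE⟩ := hwab
  obtain ⟨huC, hvC, -, -, huE, hvE⟩ := hwuv
  intro j x hx
  have hxI : x ∈ Icc (0:ℝ) T := ⟨hx.1.le, hx.2.le⟩
  have hmem : Icc (0:ℝ) T ∈ 𝓝 x := Icc_mem_nhds hx.1 hx.2
  have hD : ∀ c : ℕ → ℝ → ℝ, ContDiffOn ℝ 1 (c j) (Icc 0 T) →
      HasDerivAt (c j) (derivWithin (c j) (Icc 0 T) x) x := by
    intro c hc
    have hdw : DifferentiableWithinAt ℝ (c j) (Icc 0 T) x :=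
      (hc.differentiableOn one_ne_zero) x hxI
    have hd : DifferentiableAt ℝ (c j) x := hdw.differentiableAt hmem
    rw [derivWithin_of_mem_nhds hmem]
    exact hd.hasDerivAt
  have ha' := hD a (haC j)
  have hu' := hD u (huC j)
  have hb' := hD b (hbC j)
  have hv' := hD v (hvC j)
  have hW := (ha'.sub hu').pow 2
  have hZ := (hb'.sub hv').pow 2
  have hsum := hW.add hZ
  have hEa := haE j x hxI
  have hEu := huE j x hxI
  have hEb := hbE j x hxI
  have hEv := hvE j x hxI
  have hval : (2:ℕ) * (a j x - u j x) ^ (2-1)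
        * (derivWithin (a j) (Icc 0 T) x - derivWithin (u j) (Icc 0 T) x)
      + (2:ℕ) * (b j x - v j x) ^ (2-1)
        * (derivWithin (b j) (Icc 0 T) x - derivWithin (v j) (Icc 0 T) x)
      = mhd_I l θ a b u v j x := by
    simp only [mhd_I, mhd_e, mhd_AA, mhd_BB]
    push_cast
    linear_combination (2 * (a j x - u j x)) * (hEa - hEu)
      + (2 * (b j x - v j x)) * (hEb - hEv)
  exact hsum.congr_deriv hval

/-- Continuity of all the auxiliary quantities. -/
lemma mhd_conts (hwab : IsWeakSolutionFB l θ T f a b)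
    (hwuv : IsWeakSolutionFB l θ T f u v) :
    (∀ j, ContinuousOn (mhd_e a b u v j) (Icc 0 T)) ∧
    (∀ j, ContinuousOn (mhd_h l a b u v j) (Icc 0 T)) ∧
    (∀ j, ContinuousOn (mhd_I l θ a b u v j) (Icc 0 T)) ∧
    (∀ j, ContinuousOn (mhd_trip l a b u v j) (Icc 0 T)) := by
  obtain ⟨haC, hbC, -, -, -, -⟩ := hwab
  obtain ⟨huC, hvC, -, -, -, -⟩ := hwuv
  have hca : ∀ i, ContinuousOn (a i) (Icc (0:ℝ) T) := fun i => (haC i).continuousOn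
  have hcb : ∀ i, ContinuousOn (b i) (Icc (0:ℝ) T) := fun i => (hbC i).continuousOn
  have hcu : ∀ i, ContinuousOn (u i) (Icc (0:ℝ) T) := fun i => (huC i).continuousOn
  have hcv : ∀ i, ContinuousOn (v i) (Icc (0:ℝ) T) := fun i => (hvC i).continuousOn
  have he : ∀ j, ContinuousOn (mhd_e a b u v j) (Icc 0 T) := by
    intro j
    exact (((hca j).sub (hcu j)).pow 2).add (((hcb j).sub (hcv j)).pow 2)
  have hh : ∀ j, ContinuousOn (mhd_h l a b u v j) (Icc 0 T) := by
    intro j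
    exact continuousOn_const.mul
      ((((((hca j).pow 2).add ((hcb j).pow 2)).add ((hcu j).pow 2)).add ((hcv j).pow 2)))
  have hAB : ∀ j, ContinuousOn (mhd_AA l θ a b u v j) (Icc 0 T)
      ∧ ContinuousOn (mhd_BB l θ a b u v j) (Icc 0 T) := by
    intro j
    have hdp : ∀ c : ℕ → ℝ → ℝ, (∀ i, ContinuousOn (c i) (Icc (0:ℝ) T)) →
        ContinuousOn (dprev (fun i t => lamPow l i θ * (c i t) ^ 2) j) (Icc 0 T) := by
      intro c hc
      cases j with
      | zero => exact continuousOn_const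
      | succ k => exact continuousOn_const.mul ((hc k).pow 2)
    constructor
    · refine ContinuousOn.sub (ContinuousOn.add (ContinuousOn.add (ContinuousOn.add
        (ContinuousOn.sub ?_ ?_) ?_) ?_) ?_) ?_
      · exact (continuousOn_const.mul (((hca j).sub (hcu j)).mul (hca (j+1)))).neg
      · exact continuousOn_const.mul ((hcu j).mul ((hca (j+1)).sub (hcu (j+1))))
      · exact (hdp a hca).sub (hdp u hcu)
      · exact continuousOn_const.mul (((hcb j).sub (hcv j)).mul (hcb (j+1)))
      · exact continuousOn_const.mul ((hcv j).mul ((hcb (j+1)).sub (hcv (j+1))))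
      · exact (hdp b hcb).sub (hdp v hcv)
    · refine ContinuousOn.add (ContinuousOn.add (ContinuousOn.sub ?_ ?_) ?_) ?_
      · exact (continuousOn_const.mul (((hca j).sub (hcu j)).mul (hcb (j+1)))).neg
      · exact continuousOn_const.mul ((hcu j).mul ((hcb (j+1)).sub (hcv (j+1))))
      · exact continuousOn_const.mul (((hcb j).sub (hcv j)).mul (hca (j+1)))
      · exact continuousOn_const.mul ((hcv j).mul ((hca (j+1)).sub (hcu (j+1))))
  have hI : ∀ j, ContinuousOn (mhd_I l θ a b u v j) (Icc 0 T) := by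
    intro j
    exact (continuousOn_const.mul (he j)).add
      (((continuousOn_const.mul ((hca j).sub (hcu j))).mul (hAB j).1).add
       ((continuousOn_const.mul ((hcb j).sub (hcv j))).mul (hAB j).2))
  refine ⟨he, hh, hI, ?_⟩
  intro j
  refine ContinuousOn.add (ContinuousOn.add ?_ (hh j)) (hh (j+1))
  cases j with
  | zero => exact continuousOn_const
  | succ k => exact hh k

/-- Fundamental theorem of calculus for the shell energies. -/
lemma mhd_ftc (hT : 0 < T)
    (hwab : IsWeakSolutionFB l θ T f a b) (hwuv : IsWeakSolutionFB l θ T f u v)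
    (hinit : ∀ j, a j 0 = u j 0 ∧ b j 0 = v j 0) :
    ∀ j, ∀ t ∈ Icc (0:ℝ) T, mhd_e a b u v j t = ∫ τ in Ioc 0 t, mhd_I l θ a b u v j τ := by
  obtain ⟨he_cont, -, hI_cont, -⟩ := mhd_conts hwab hwuv
  intro j t ht
  have hIcc : Icc (0:ℝ) t ⊆ Icc (0:ℝ) T := Icc_subset_Icc le_rfl ht.2
  have h1 : ∫ τ in (0:ℝ)..t, mhd_I l θ a b u v j τ
      = mhd_e a b u v j t - mhd_e a b u v j 0 := by
    apply intervalIntegral.integral_eq_sub_of_hasDeriv_right_of_le ht.1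
      ((he_cont j).mono hIcc)
    · intro x hx
      exact ((mhd_hasDerivAt hwab hwuv j x ⟨hx.1, lt_of_lt_of_le hx.2 ht.2⟩).hasDerivWithinAt)
    · apply ContinuousOn.intervalIntegrable
      rw [uIcc_of_le ht.1]
      exact (hI_cont j).mono hIcc
  have h0 : mhd_e a b u v j 0 = 0 := by
    simp [mhd_e, (hinit j).1, (hinit j).2]
  rw [intervalIntegral.integral_of_le ht.1] at h1
  rw [h1, h0]
  ring

/-- The difference energy vanishes. -/
lemma mhd_S_zero (hl : 1 < l) (hθ2 : θ ≤ 2) (hT : 0 < T)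
    (hab : IsLerayHopfFB l θ T f a b) (huv : IsLerayHopfFB l θ T f u v)
    (hinit : ∀ j, a j 0 = u j 0 ∧ b j 0 = v j 0) :
    ∀ t ∈ Icc (0:ℝ) T, (∑' j, mhd_e a b u v j t) = 0 := by
  classical
  have hl0 : (0:ℝ) < l := by linarith
  obtain ⟨hwab, ⟨Mab, hMab⟩, habH1, -⟩ := hab
  obtain ⟨hwuv, ⟨Muv, hMuv⟩, huvH1, -⟩ := huv
  obtain ⟨he_cont, hh_cont, hI_cont, htrip_cont⟩ := mhd_conts hwab hwuv
  have haS := hwab.2.2.1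
  have hbS := hwab.2.2.2.1
  have huS := hwuv.2.2.1
  have hvS := hwuv.2.2.2.1
  have hca : ∀ i, ContinuousOn (a i) (Icc (0:ℝ) T) := fun i => (hwab.1 i).continuousOn
  have hcb : ∀ i, ContinuousOn (b i) (Icc (0:ℝ) T) := fun i => (hwab.2.1 i).continuousOn
  have hcu : ∀ i, ContinuousOn (u i) (Icc (0:ℝ) T) := fun i => (hwuv.1 i).continuousOn
  have hcv : ∀ i, ContinuousOn (v i) (Icc (0:ℝ) T) := fun i => (hwuv.2.1 i).continuousOn
  have he0 : ∀ j τ, 0 ≤ mhd_e a b u v j τ := fun j τ =>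
    add_nonneg (sq_nonneg _) (sq_nonneg _)
  have hlam20 : ∀ j : ℕ, 0 ≤ lamPow l j 2 := fun j => by
    rw [mhd_lamPow_two l hl0]; positivity
  have hh0 : ∀ j τ, 0 ≤ mhd_h l a b u v j τ := fun j τ =>
    mul_nonneg (hlam20 j) (by positivity)
  have htrip0 : ∀ j τ, 0 ≤ mhd_trip l a b u v j τ := by
    intro j τ
    have hp : 0 ≤ mhd_prev (fun i => mhd_h l a b u v i τ) j := by
      cases j with
      | zero => exact le_rfl
      | succ k => exact hh0 k τ
    exact add_nonneg (add_nonneg hp (hh0 j τ)) (hh0 (j+1) τ)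
  -- summability of shell energies
  have he_s : ∀ t ∈ Icc (0:ℝ) T, Summable (fun j => mhd_e a b u v j t) := by
    intro t ht
    have hmaj : Summable (fun j => 2*(a j t)^2 + 2*(u j t)^2 + (2*(b j t)^2 + 2*(v j t)^2)) :=
      (((haS t ht).mul_left 2).add ((huS t ht).mul_left 2)).add
        (((hbS t ht).mul_left 2).add ((hvS t ht).mul_left 2))
    refine Summable.of_nonneg_of_le (fun j => he0 j t) (fun j => ?_) hmaj
    simp only [mhd_e]
    linarith [mhd_two' (a j t) (u j t), mhd_two' (b j t) (v j t)]
  have hS0 : ∀ τ : ℝ, 0 ≤ ∑' j, mhd_e a b u v j τ := fun τ => tsum_nonneg (fun j => he0 j τ)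
  -- uniform bound on S
  have hSle : ∀ t ∈ Icc (0:ℝ) T, (∑' j, mhd_e a b u v j t) ≤ 2*Mab + 2*Muv := by
    intro t ht
    have s1 := (haS t ht).mul_left (2:ℝ)
    have s2 := (huS t ht).mul_left (2:ℝ)
    have s3 := (hbS t ht).mul_left (2:ℝ)
    have s4 := (hvS t ht).mul_left (2:ℝ)
    have h1 : (∑' j, mhd_e a b u v j t)
        ≤ ∑' j, (2*(a j t)^2 + 2*(u j t)^2 + (2*(b j t)^2 + 2*(v j t)^2)) := by
      refine Summable.tsum_le_tsum (fun j => ?_) (he_s t ht) (((s1.add s2)).add (s3.add s4))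
      simp only [mhd_e]
      linarith [mhd_two' (a j t) (u j t), mhd_two' (b j t) (v j t)]
    rw [Summable.tsum_add (s1.add s2) (s3.add s4), Summable.tsum_add s1 s2, Summable.tsum_add s3 s4,
      tsum_mul_left, tsum_mul_left, tsum_mul_left, tsum_mul_left] at h1
    have h2 := hMab t ht
    have h3 := hMuv t ht
    linarith [h1, h2, h3]
  have hM00 : (0:ℝ) ≤ 2*Mab + 2*Muv := le_trans (hS0 0) (hSle 0 ⟨le_rfl, hT.le⟩)
  -- pointwise square bounds
  have hsq : ∀ t ∈ Icc (0:ℝ) T, ∀ i,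
      (a i t - u i t)^2 ≤ (∑' j, mhd_e a b u v j t)
        ∧ (b i t - v i t)^2 ≤ ∑' j, mhd_e a b u v j t := by
    intro t ht i
    have hle := Summable.le_tsum (he_s t ht) i (fun j _ => he0 j t)
    constructor
    · refine le_trans ?_ hle
      simp only [mhd_e]
      linarith [sq_nonneg (b i t - v i t)]
    · refine le_trans ?_ hle
      simp only [mhd_e]
      linarith [sq_nonneg (a i t - u i t)]
  have hIb : ∀ t ∈ Icc (0:ℝ) T, ∀ j,
      mhd_I l θ a b u v j t ≤ 10 * (∑' i, mhd_e a b u v i t) * mhd_trip l a b u v j t ∧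
      |mhd_I l θ a b u v j t| ≤ 4 * lamPow l j 2 * mhd_e a b u v j t
        + 10 * (∑' i, mhd_e a b u v i t) * mhd_trip l a b u v j t :=
    fun t ht j => mhd_I_bound hl hθ2 j t _ (hsq t ht)
  -- integrability of shell H¹ weights
  have hh_int : ∀ j, ∀ t ∈ Icc (0:ℝ) T, IntegrableOn (mhd_h l a b u v j) (Ioc 0 t) volume :=
    fun j t ht => ((hh_cont j).integrableOn_compact isCompact_Icc).mono_set
      (fun x hx => ⟨hx.1.le, hx.2.trans ht.2⟩)
  -- summability of ∫ h over [0,T]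
  have hph_int : ∀ j, IntegrableOn (fun τ => lamPow l j 2 * ((a j τ)^2 + (b j τ)^2))
      (Ioc 0 T) volume := fun j =>
    ((continuousOn_const.mul (((hca j).pow 2).add ((hcb j).pow 2))).integrableOn_compact
      isCompact_Icc).mono_set Ioc_subset_Icc_self
  have hqh_int : ∀ j, IntegrableOn (fun τ => lamPow l j 2 * ((u j τ)^2 + (v j τ)^2))
      (Ioc 0 T) volume := fun j =>
    ((continuousOn_const.mul (((hcu j).pow 2).add ((hcv j).pow 2))).integrableOn_compact
      isCompact_Icc).mono_set Ioc_subset_Icc_self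
  have habH1' : Summable (fun j => ∫ τ in Ioc 0 T, lamPow l j 2 * ((a j τ)^2 + (b j τ)^2)) := by
    refine habH1.congr fun j => ?_
    rw [intervalIntegral.integral_of_le hT.le]
  have huvH1' : Summable (fun j => ∫ τ in Ioc 0 T, lamPow l j 2 * ((u j τ)^2 + (v j τ)^2)) := by
    refine huvH1.congr fun j => ?_
    rw [intervalIntegral.integral_of_le hT.le]
  have hc_eq : ∀ j, (∫ τ in Ioc 0 T, mhd_h l a b u v j τ)
      = (∫ τ in Ioc 0 T, lamPow l j 2 * ((a j τ)^2 + (b j τ)^2))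
        + ∫ τ in Ioc 0 T, lamPow l j 2 * ((u j τ)^2 + (v j τ)^2) := by
    intro j
    rw [← integral_add (hph_int j) (hqh_int j)]
    apply integral_congr_ae
    refine ae_of_all _ fun τ => ?_
    simp only [mhd_h]
    ring
  have hc_sum : Summable (fun j => ∫ τ in Ioc 0 T, mhd_h l a b u v j τ) :=
    Summable.congr (habH1'.add huvH1') (fun j => (hc_eq j).symm)
  have hc0 : ∀ j, 0 ≤ ∫ τ in Ioc 0 T, mhd_h l a b u v j τ :=
    fun j => setIntegral_nonneg measurableSet_Ioc (fun τ _ => hh0 j τ)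
  -- φ
  have hφ0 : ∀ τ : ℝ, (0:ℝ) ≤ (∑' j, ENNReal.ofReal (mhd_h l a b u v j τ)).toReal :=
    fun τ => ENNReal.toReal_nonneg
  have hφeq : ∀ τ, (∑' j, mhd_h l a b u v j τ)
      = (∑' j, ENNReal.ofReal (mhd_h l a b u v j τ)).toReal :=
    fun τ => mhd_tsum_toReal _ (fun j => hh0 j τ)
  have hh_aem : ∀ j, AEMeasurable (mhd_h l a b u v j) (volume.restrict (Ioc 0 T)) :=
    fun j => ((hh_cont j).mono Ioc_subset_Icc_self).aemeasurable measurableSet_Ioc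
  have hofReal_aem : ∀ j, AEMeasurable (fun τ => ENNReal.ofReal (mhd_h l a b u v j τ))
      (volume.restrict (Ioc 0 T)) :=
    fun j => ENNReal.measurable_ofReal.comp_aemeasurable (hh_aem j)
  have htsum_aem : AEMeasurable (fun τ => ∑' j, ENNReal.ofReal (mhd_h l a b u v j τ))
      (volume.restrict (Ioc 0 T)) := AEMeasurable.ennreal_tsum hofReal_aem
  have hlint : ∫⁻ τ in Ioc 0 T, (∑' j, ENNReal.ofReal (mhd_h l a b u v j τ)) ≠ ⊤ := by
    rw [lintegral_tsum hofReal_aem]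
    have heq : ∀ j : ℕ, ∫⁻ τ in Ioc 0 T, ENNReal.ofReal (mhd_h l a b u v j τ)
        = ENNReal.ofReal (∫ τ in Ioc 0 T, mhd_h l a b u v j τ) := by
      intro j
      rw [← ofReal_integral_eq_lintegral_ofReal ((hh_int j T ⟨hT.le, le_rfl⟩))
        ((ae_restrict_iff' measurableSet_Ioc).2 (ae_of_all _ (fun τ _ => hh0 j τ)))]
    rw [tsum_congr heq, ← ENNReal.ofReal_tsum_of_nonneg hc0 hc_sum]
    exact ENNReal.ofReal_ne_top
  have hφ_int : IntegrableOn
      (fun τ => (∑' j, ENNReal.ofReal (mhd_h l a b u v j τ)).toReal) (Ioc 0 T) volume :=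
    integrable_toReal_of_lintegral_ne_top htsum_aem hlint
  have hφ_aem : AEMeasurable
      (fun τ => (∑' j, ENNReal.ofReal (mhd_h l a b u v j τ)).toReal)
      (volume.restrict (Ioc 0 T)) := ENNReal.measurable_toReal.comp_aemeasurable htsum_aem
  -- S measurability
  have hS_aem : AEMeasurable (fun τ => ∑' j, mhd_e a b u v j τ)
      (volume.restrict (Ioc 0 T)) := by
    have hN : ∀ N : ℕ, AEMeasurable (fun τ => ∑ j ∈ Finset.range N, mhd_e a b u v j τ)
        (volume.restrict (Ioc 0 T)) := by
      intro N
      have hcN : ContinuousOn (fun τ => ∑ j ∈ Finset.range N, mhd_e a b u v j τ)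
          (Icc (0:ℝ) T) := continuousOn_finset_sum _ (fun i _ => he_cont i)
      exact (hcN.mono Ioc_subset_Icc_self).aemeasurable measurableSet_Ioc
    refine aemeasurable_of_tendsto_metrizable_ae atTop hN ?_
    refine (ae_restrict_iff' measurableSet_Ioc).2 (ae_of_all _ fun τ hτ => ?_)
    exact (he_s τ ⟨hτ.1.le, hτ.2⟩).hasSum.tendsto_sum_nat
  -- generic bound for integrals against the summable majorant
  have hM0 : (0:ℝ) ≤ 2*Mab + 2*Muv := hM00
  have htrip_intT : ∀ j, IntegrableOn (mhd_trip l a b u v j) (Ioc 0 T) volume :=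
    fun j => ((htrip_cont j).integrableOn_compact isCompact_Icc).mono_set Ioc_subset_Icc_self
  have htrip_integral : ∀ j, (∫ τ in Ioc 0 T, mhd_trip l a b u v j τ)
      = mhd_prev (fun i => ∫ τ in Ioc 0 T, mhd_h l a b u v i τ) j
        + ((∫ τ in Ioc 0 T, mhd_h l a b u v j τ)
          + ∫ τ in Ioc 0 T, mhd_h l a b u v (j+1) τ) := by
    intro j
    cases j with
    | zero =>
      have h1 : (∫ τ in Ioc 0 T, mhd_trip l a b u v 0 τ)
          = ∫ τ in Ioc 0 T, (mhd_h l a b u v 0 τ + mhd_h l a b u v 1 τ) := by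
        apply integral_congr_ae
        refine ae_of_all _ fun τ => ?_
        simp [mhd_trip, mhd_prev]
      rw [h1, integral_add (hh_int 0 T ⟨hT.le, le_rfl⟩) (hh_int 1 T ⟨hT.le, le_rfl⟩)]
      simp [mhd_prev]
    | succ k =>
      have h1 : (∫ τ in Ioc 0 T, mhd_trip l a b u v (k+1) τ)
          = ∫ τ in Ioc 0 T, (mhd_h l a b u v k τ
              + (mhd_h l a b u v (k+1) τ + mhd_h l a b u v (k+1+1) τ)) := by
        apply integral_congr_ae
        refine ae_of_all _ fun τ => ?_
        simp [mhd_trip, mhd_prev]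
        ring
      have i2 : IntegrableOn (fun τ => mhd_h l a b u v (k+1) τ + mhd_h l a b u v (k+1+1) τ)
          (Ioc 0 T) volume :=
        (hh_int (k+1) T ⟨hT.le, le_rfl⟩).add (hh_int (k+1+1) T ⟨hT.le, le_rfl⟩)
      rw [h1, integral_add (hh_int k T ⟨hT.le, le_rfl⟩) i2,
        integral_add (hh_int (k+1) T ⟨hT.le, le_rfl⟩) (hh_int (k+1+1) T ⟨hT.le, le_rfl⟩)]
      simp [mhd_prev]
  have hγ_sum : Summable (fun j => 8 * (∫ τ in Ioc 0 T, mhd_h l a b u v j τ)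
      + 10 * (2*Mab+2*Muv) * (mhd_prev (fun i => ∫ τ in Ioc 0 T, mhd_h l a b u v i τ) j
        + ((∫ τ in Ioc 0 T, mhd_h l a b u v j τ)
          + ∫ τ in Ioc 0 T, mhd_h l a b u v (j+1) τ))) :=
    (hc_sum.mul_left 8).add
      (((mhd_prev_summable hc_sum).add (hc_sum.add (mhd_succ_summable hc_sum))).mul_left
        (10 * (2*Mab+2*Muv)))
  have hle2h : ∀ j τ, lamPow l j 2 * mhd_e a b u v j τ ≤ 2 * mhd_h l a b u v j τ := by
    intro j τ
    have h1 : mhd_e a b u v j τ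
        ≤ 2*((a j τ)^2 + (b j τ)^2 + (u j τ)^2 + (v j τ)^2) := by
      simp only [mhd_e]
      linarith [mhd_two' (a j τ) (u j τ), mhd_two' (b j τ) (v j τ),
        sq_nonneg (b j τ), sq_nonneg (v j τ), sq_nonneg (a j τ), sq_nonneg (u j τ)]
    calc lamPow l j 2 * mhd_e a b u v j τ
        ≤ lamPow l j 2 * (2*((a j τ)^2 + (b j τ)^2 + (u j τ)^2 + (v j τ)^2)) :=
          mul_le_mul_of_nonneg_left h1 (hlam20 j)
    _ = 2 * mhd_h l a b u v j τ := by simp only [mhd_h]; ring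
  -- the key Grönwall inequality
  have hkey : ∀ t ∈ Icc (0:ℝ) T, (∑' j, mhd_e a b u v j t)
      ≤ ∫ τ in Ioc 0 t,
          (fun τ' => 30 * (∑' j, ENNReal.ofReal (mhd_h l a b u v j τ')).toReal) τ
            * (∑' j, mhd_e a b u v j τ) := by
    intro t ht
    simp only
    have hsubI : Ioc (0:ℝ) t ⊆ Ioc (0:ℝ) T := Ioc_subset_Ioc le_rfl ht.2
    have hsubIcc : Ioc (0:ℝ) t ⊆ Icc (0:ℝ) T := fun x hx => ⟨hx.1.le, hx.2.trans ht.2⟩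
    have hmle : volume.restrict (Ioc (0:ℝ) t) ≤ volume.restrict (Ioc (0:ℝ) T) :=
      Measure.restrict_mono hsubI le_rfl
    have hS_aem_t : AEMeasurable (fun τ => ∑' j, mhd_e a b u v j τ)
        (volume.restrict (Ioc 0 t)) := hS_aem.mono_measure hmle
    have hI_int : ∀ j, IntegrableOn (mhd_I l θ a b u v j) (Ioc 0 t) volume :=
      fun j => ((hI_cont j).integrableOn_compact isCompact_Icc).mono_set hsubIcc
    have hSw_int : ∀ w : ℝ → ℝ, ContinuousOn w (Icc (0:ℝ) T) → (∀ τ, 0 ≤ w τ) →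
        IntegrableOn (fun τ => (∑' j, mhd_e a b u v j τ) * w τ) (Ioc 0 t) volume := by
      intro w hw hw0
      have hwint : IntegrableOn w (Ioc 0 t) volume :=
        (hw.integrableOn_compact isCompact_Icc).mono_set hsubIcc
      refine Integrable.mono' (hwint.const_mul (2*Mab+2*Muv))
        ((hS_aem_t.mul (((hw.mono hsubIcc).aemeasurable
          measurableSet_Ioc))).aestronglyMeasurable) ?_
      refine (ae_restrict_iff' measurableSet_Ioc).2 (ae_of_all _ fun τ hτ => ?_)
      have h1 : 0 ≤ (∑' j, mhd_e a b u v j τ) * w τ := mul_nonneg (hS0 τ) (hw0 τ)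
      rw [Real.norm_of_nonneg h1]
      exact mul_le_mul_of_nonneg_right (hSle τ (hsubIcc hτ)) (hw0 τ)
    have hstepA : (∑' j, mhd_e a b u v j t)
        = ∑' j, ∫ τ in Ioc 0 t, mhd_I l θ a b u v j τ :=
      tsum_congr fun j => mhd_ftc hT hwab hwuv hinit j t ht
    -- generic norm bound
    have hgen : ∀ (j : ℕ) (ψ : ℝ → ℝ), IntegrableOn ψ (Ioc 0 t) volume →
        (∀ τ ∈ Ioc (0:ℝ) t, ‖ψ τ‖ ≤ 8 * mhd_h l a b u v j τ
          + 10 * (2*Mab+2*Muv) * mhd_trip l a b u v j τ) →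
        ‖∫ τ in Ioc 0 t, ψ τ‖ ≤ 8 * (∫ τ in Ioc 0 T, mhd_h l a b u v j τ)
          + 10 * (2*Mab+2*Muv) * (mhd_prev (fun i => ∫ τ in Ioc 0 T, mhd_h l a b u v i τ) j
            + ((∫ τ in Ioc 0 T, mhd_h l a b u v j τ)
              + ∫ τ in Ioc 0 T, mhd_h l a b u v (j+1) τ)) := by
      intro j ψ hψint hψb
      have hbintT : IntegrableOn (fun τ => 8 * mhd_h l a b u v j τ
          + 10 * (2*Mab+2*Muv) * mhd_trip l a b u v j τ) (Ioc 0 T) volume := by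
        exact ((hh_int j T ⟨hT.le, le_rfl⟩).const_mul 8).add
          ((htrip_intT j).const_mul (10 * (2*Mab+2*Muv)))
      calc ‖∫ τ in Ioc 0 t, ψ τ‖ ≤ ∫ τ in Ioc 0 t, ‖ψ τ‖ :=
        norm_integral_le_integral_norm _
      _ ≤ ∫ τ in Ioc 0 t, (8 * mhd_h l a b u v j τ
          + 10 * (2*Mab+2*Muv) * mhd_trip l a b u v j τ) := by
          apply setIntegral_mono_on hψint.norm (hbintT.mono_set hsubI) measurableSet_Ioc
          exact hψb
      _ ≤ ∫ τ in Ioc 0 T, (8 * mhd_h l a b u v j τ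
          + 10 * (2*Mab+2*Muv) * mhd_trip l a b u v j τ) := by
          apply setIntegral_mono_set hbintT ?_ (HasSubset.Subset.eventuallyLE hsubI)
          refine (ae_restrict_iff' measurableSet_Ioc).2 (ae_of_all _ fun τ hτ => ?_)
          have h2 : 0 ≤ 10 * (2*Mab+2*Muv) * mhd_trip l a b u v j τ :=
            mul_nonneg (by linarith) (htrip0 j τ)
          have h3 : 0 ≤ 8 * mhd_h l a b u v j τ := by linarith [hh0 j τ]
          show (0:ℝ) ≤ 8 * mhd_h l a b u v j τ + 10 * (2*Mab+2*Muv) * mhd_trip l a b u v j τ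
          linarith
      _ = 8 * (∫ τ in Ioc 0 T, mhd_h l a b u v j τ)
          + 10 * (2*Mab+2*Muv) * (mhd_prev (fun i => ∫ τ in Ioc 0 T, mhd_h l a b u v i τ) j
            + ((∫ τ in Ioc 0 T, mhd_h l a b u v j τ)
              + ∫ τ in Ioc 0 T, mhd_h l a b u v (j+1) τ)) := by
          rw [integral_add ((hh_int j T ⟨hT.le, le_rfl⟩).const_mul 8)
            ((htrip_intT j).const_mul (10 * (2*Mab+2*Muv))),
            integral_const_mul, integral_const_mul, htrip_integral j]
    have habs : ∀ j, ∀ τ ∈ Ioc (0:ℝ) t, ‖mhd_I l θ a b u v j τ‖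
        ≤ 8 * mhd_h l a b u v j τ + 10 * (2*Mab+2*Muv) * mhd_trip l a b u v j τ := by
      intro j τ hτ
      have h1 := (hIb τ (hsubIcc hτ) j).2
      have h2 := hle2h j τ
      have h3 : 10 * (∑' i, mhd_e a b u v i τ) * mhd_trip l a b u v j τ
          ≤ 10 * (2*Mab+2*Muv) * mhd_trip l a b u v j τ := by
        apply mul_le_mul_of_nonneg_right _ (htrip0 j τ)
        have := hSle τ (hsubIcc hτ)
        linarith
      rw [Real.norm_eq_abs]
      linarith
    have hsumL : Summable (fun j => ∫ τ in Ioc 0 t, mhd_I l θ a b u v j τ) :=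
      Summable.of_norm_bounded hγ_sum (fun j => hgen j _ (hI_int j) (habs j))
    have hSh_int : ∀ i, IntegrableOn
        (fun τ => (∑' k, mhd_e a b u v k τ) * mhd_h l a b u v i τ) (Ioc 0 t) volume :=
      fun i => hSw_int _ (hh_cont i) (hh0 i)
    have hStrip_int : ∀ j, IntegrableOn
        (fun τ => (∑' k, mhd_e a b u v k τ) * mhd_trip l a b u v j τ) (Ioc 0 t) volume :=
      fun j => hSw_int _ (htrip_cont j) (htrip0 j)
    have habs' : ∀ j, ∀ τ ∈ Ioc (0:ℝ) t,
        ‖10 * ((∑' k, mhd_e a b u v k τ) * mhd_trip l a b u v j τ)‖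
        ≤ 8 * mhd_h l a b u v j τ + 10 * (2*Mab+2*Muv) * mhd_trip l a b u v j τ := by
      intro j τ hτ
      have h1 : 0 ≤ 10 * ((∑' k, mhd_e a b u v k τ) * mhd_trip l a b u v j τ) :=
        mul_nonneg (by norm_num) (mul_nonneg (hS0 τ) (htrip0 j τ))
      rw [Real.norm_of_nonneg h1]
      have h2 : (∑' k, mhd_e a b u v k τ) * mhd_trip l a b u v j τ
          ≤ (2*Mab+2*Muv) * mhd_trip l a b u v j τ :=
        mul_le_mul_of_nonneg_right (hSle τ (hsubIcc hτ)) (htrip0 j τ)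
      have h3 : 0 ≤ 8 * mhd_h l a b u v j τ := by linarith [hh0 j τ]
      linarith
    have hmono_j : ∀ j, (∫ τ in Ioc 0 t, mhd_I l θ a b u v j τ)
        ≤ ∫ τ in Ioc 0 t, 10 * ((∑' k, mhd_e a b u v k τ) * mhd_trip l a b u v j τ) := by
      intro j
      apply setIntegral_mono_on (hI_int j) ((hStrip_int j).const_mul 10) measurableSet_Ioc
      intro τ hτ
      have := (hIb τ (hsubIcc hτ) j).1
      linarith
    have hsumR : Summable (fun j => ∫ τ in Ioc 0 t,
        10 * ((∑' k, mhd_e a b u v k τ) * mhd_trip l a b u v j τ)) :=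
      Summable.of_norm_bounded hγ_sum
        (fun j => hgen j _ ((hStrip_int j).const_mul 10) (habs' j))
    have hstepD : (∑' j, mhd_e a b u v j t) ≤ ∑' j, ∫ τ in Ioc 0 t,
        10 * ((∑' k, mhd_e a b u v k τ) * mhd_trip l a b u v j τ) := by
      rw [hstepA]
      exact Summable.tsum_le_tsum hmono_j hsumL hsumR
    -- evaluate the sum of integrals
    have hX0 : ∀ i, 0 ≤ ∫ τ in Ioc 0 t, (∑' k, mhd_e a b u v k τ) * mhd_h l a b u v i τ :=
      fun i => setIntegral_nonneg measurableSet_Ioc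
        (fun τ _ => mul_nonneg (hS0 τ) (hh0 i τ))
    have hX_le : ∀ i, (∫ τ in Ioc 0 t, (∑' k, mhd_e a b u v k τ) * mhd_h l a b u v i τ)
        ≤ (2*Mab+2*Muv) * ∫ τ in Ioc 0 T, mhd_h l a b u v i τ := by
      intro i
      calc (∫ τ in Ioc 0 t, (∑' k, mhd_e a b u v k τ) * mhd_h l a b u v i τ)
          ≤ ∫ τ in Ioc 0 t, (2*Mab+2*Muv) * mhd_h l a b u v i τ :=
            setIntegral_mono_on (hSh_int i) ((hh_int i t ht).const_mul _) measurableSet_Ioc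
              (fun τ hτ => mul_le_mul_of_nonneg_right (hSle τ (hsubIcc hτ)) (hh0 i τ))
      _ ≤ ∫ τ in Ioc 0 T, (2*Mab+2*Muv) * mhd_h l a b u v i τ :=
            setIntegral_mono_set ((hh_int i T ⟨hT.le, le_rfl⟩).const_mul _)
              ((ae_restrict_iff' measurableSet_Ioc).2
                (ae_of_all _ fun τ hτ => mul_nonneg hM0 (hh0 i τ)))
              (HasSubset.Subset.eventuallyLE hsubI)
      _ = (2*Mab+2*Muv) * ∫ τ in Ioc 0 T, mhd_h l a b u v i τ := integral_const_mul _ _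
    have hX_sum : Summable (fun i =>
        ∫ τ in Ioc 0 t, (∑' k, mhd_e a b u v k τ) * mhd_h l a b u v i τ) :=
      Summable.of_nonneg_of_le hX0 hX_le (hc_sum.mul_left _)
    have hXprev_int : ∀ j, IntegrableOn (fun τ => (∑' k, mhd_e a b u v k τ)
        * mhd_prev (fun i => mhd_h l a b u v i τ) j) (Ioc 0 t) volume := by
      intro j
      cases j with
      | zero =>
        apply Integrable.congr (integrable_zero _ _ _)
        refine ae_of_all _ fun τ => ?_
        simp [mhd_prev]
      | succ k => exact hSh_int k
    have hXprev : ∀ j, (∫ τ in Ioc 0 t, (∑' k, mhd_e a b u v k τ)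
        * mhd_prev (fun i => mhd_h l a b u v i τ) j)
        = mhd_prev (fun i => ∫ τ in Ioc 0 t,
            (∑' k, mhd_e a b u v k τ) * mhd_h l a b u v i τ) j := by
      intro j
      cases j with
      | zero => simp [mhd_prev]
      | succ k => simp [mhd_prev]
    have hsplit : ∀ j, (∫ τ in Ioc 0 t,
        10 * ((∑' k, mhd_e a b u v k τ) * mhd_trip l a b u v j τ))
        = 10 * ((mhd_prev (fun i => ∫ τ in Ioc 0 t,
            (∑' k, mhd_e a b u v k τ) * mhd_h l a b u v i τ) j)
          + ((∫ τ in Ioc 0 t, (∑' k, mhd_e a b u v k τ) * mhd_h l a b u v j τ)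
            + ∫ τ in Ioc 0 t, (∑' k, mhd_e a b u v k τ) * mhd_h l a b u v (j+1) τ)) := by
      intro j
      rw [integral_const_mul]
      congr 1
      have h1 : (fun τ => (∑' k, mhd_e a b u v k τ) * mhd_trip l a b u v j τ)
          = fun τ => ((∑' k, mhd_e a b u v k τ) * mhd_prev (fun i => mhd_h l a b u v i τ) j)
            + (((∑' k, mhd_e a b u v k τ) * mhd_h l a b u v j τ)
               + ((∑' k, mhd_e a b u v k τ) * mhd_h l a b u v (j+1) τ)) := by
        funext τ
        simp only [mhd_trip]
        ring
      have i2 : IntegrableOn (fun τ => ((∑' k, mhd_e a b u v k τ) * mhd_h l a b u v j τ)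
          + ((∑' k, mhd_e a b u v k τ) * mhd_h l a b u v (j+1) τ)) (Ioc 0 t) volume :=
        (hSh_int j).add (hSh_int (j+1))
      rw [h1, integral_add (hXprev_int j) i2,
        integral_add (hSh_int j) (hSh_int (j+1)), hXprev j]
    have hstepE : (∑' j, ∫ τ in Ioc 0 t,
        10 * ((∑' k, mhd_e a b u v k τ) * mhd_trip l a b u v j τ))
        ≤ 30 * ∑' i, ∫ τ in Ioc 0 t, (∑' k, mhd_e a b u v k τ) * mhd_h l a b u v i τ := by
      calc (∑' j, ∫ τ in Ioc 0 t, 10 * ((∑' k, mhd_e a b u v k τ) * mhd_trip l a b u v j τ))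
          = ∑' j, 10 * ((mhd_prev (fun i => ∫ τ in Ioc 0 t,
              (∑' k, mhd_e a b u v k τ) * mhd_h l a b u v i τ) j)
            + ((∫ τ in Ioc 0 t, (∑' k, mhd_e a b u v k τ) * mhd_h l a b u v j τ)
              + ∫ τ in Ioc 0 t, (∑' k, mhd_e a b u v k τ) * mhd_h l a b u v (j+1) τ)) :=
            tsum_congr hsplit
      _ = 10 * ∑' j, ((mhd_prev (fun i => ∫ τ in Ioc 0 t,
              (∑' k, mhd_e a b u v k τ) * mhd_h l a b u v i τ) j)
            + ((∫ τ in Ioc 0 t, (∑' k, mhd_e a b u v k τ) * mhd_h l a b u v j τ)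
              + ∫ τ in Ioc 0 t, (∑' k, mhd_e a b u v k τ) * mhd_h l a b u v (j+1) τ)) :=
            tsum_mul_left
      _ = 10 * ((∑' j, mhd_prev (fun i => ∫ τ in Ioc 0 t,
              (∑' k, mhd_e a b u v k τ) * mhd_h l a b u v i τ) j)
            + ((∑' j, ∫ τ in Ioc 0 t, (∑' k, mhd_e a b u v k τ) * mhd_h l a b u v j τ)
              + ∑' j, ∫ τ in Ioc 0 t,
                  (∑' k, mhd_e a b u v k τ) * mhd_h l a b u v (j+1) τ)) := by
            rw [Summable.tsum_add (mhd_prev_summable hX_sum) (hX_sum.add (mhd_succ_summable hX_sum)),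
              Summable.tsum_add hX_sum (mhd_succ_summable hX_sum)]
      _ ≤ 30 * ∑' i, ∫ τ in Ioc 0 t, (∑' k, mhd_e a b u v k τ) * mhd_h l a b u v i τ := by
            have e1 := mhd_prev_tsum hX_sum
            have e2 := mhd_succ_tsum_le hX_sum hX0
            linarith
    -- Fubini
    have hF_norm : Summable (fun i => ∫ τ in Ioc 0 t,
        ‖(∑' k, mhd_e a b u v k τ) * mhd_h l a b u v i τ‖) := by
      refine hX_sum.congr fun i => ?_
      refine integral_congr_ae ((ae_restrict_iff' measurableSet_Ioc).2
        (ae_of_all _ fun τ hτ => ?_))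
      show (∑' k, mhd_e a b u v k τ) * mhd_h l a b u v i τ
          = ‖(∑' k, mhd_e a b u v k τ) * mhd_h l a b u v i τ‖
      rw [Real.norm_of_nonneg (mul_nonneg (hS0 τ) (hh0 i τ))]
    have hswap := integral_tsum_of_summable_integral_norm
      (F := fun i τ => (∑' k, mhd_e a b u v k τ) * mhd_h l a b u v i τ)
      (μ := volume.restrict (Ioc 0 t)) hSh_int hF_norm
    have hpt : (fun τ => ∑' i, (∑' k, mhd_e a b u v k τ) * mhd_h l a b u v i τ)
        = fun τ => (∑' k, mhd_e a b u v k τ)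
            * (∑' i, ENNReal.ofReal (mhd_h l a b u v i τ)).toReal := by
      funext τ
      rw [tsum_mul_left, hφeq τ]
    calc (∑' j, mhd_e a b u v j t)
        ≤ ∑' j, ∫ τ in Ioc 0 t,
            10 * ((∑' k, mhd_e a b u v k τ) * mhd_trip l a b u v j τ) := hstepD
    _ ≤ 30 * ∑' i, ∫ τ in Ioc 0 t, (∑' k, mhd_e a b u v k τ) * mhd_h l a b u v i τ := hstepE
    _ = 30 * ∫ τ in Ioc 0 t, (∑' k, mhd_e a b u v k τ)
          * (∑' i, ENNReal.ofReal (mhd_h l a b u v i τ)).toReal := by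
          rw [hswap, hpt]
    _ = ∫ τ in Ioc 0 t, (30 * (∑' j, ENNReal.ofReal (mhd_h l a b u v j τ)).toReal)
          * (∑' j, mhd_e a b u v j τ) := by
          rw [← integral_const_mul]
          apply integral_congr_ae
          refine ae_of_all _ fun τ => ?_
          ring
  -- integrability of the Grönwall data
  have hgS_int : IntegrableOn (fun τ =>
      (fun τ' => 30 * (∑' j, ENNReal.ofReal (mhd_h l a b u v j τ')).toReal) τ
        * (∑' j, mhd_e a b u v j τ)) (Ioc 0 T) volume := by
    simp only
    refine Integrable.mono' (hφ_int.const_mul (30*(2*Mab+2*Muv)))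
      (((hφ_aem.const_mul 30).mul hS_aem).aestronglyMeasurable) ?_
    refine (ae_restrict_iff' measurableSet_Ioc).2 (ae_of_all _ fun τ hτ => ?_)
    have h1 : 0 ≤ (30 * (∑' j, ENNReal.ofReal (mhd_h l a b u v j τ)).toReal)
        * (∑' j, mhd_e a b u v j τ) :=
      mul_nonneg (mul_nonneg (by norm_num) (hφ0 τ)) (hS0 τ)
    rw [Real.norm_of_nonneg h1]
    calc (30 * (∑' j, ENNReal.ofReal (mhd_h l a b u v j τ)).toReal)
          * (∑' j, mhd_e a b u v j τ)
        ≤ (30 * (∑' j, ENNReal.ofReal (mhd_h l a b u v j τ)).toReal) * (2*Mab+2*Muv) :=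
          mul_le_mul_of_nonneg_left (hSle τ ⟨hτ.1.le, hτ.2⟩)
            (mul_nonneg (by norm_num) (hφ0 τ))
    _ = 30*(2*Mab+2*Muv) * (∑' j, ENNReal.ofReal (mhd_h l a b u v j τ)).toReal := by ring
  exact mhd_gronwall T (fun τ => ∑' j, mhd_e a b u v j τ)
    (fun τ => 30 * (∑' j, ENNReal.ofReal (mhd_h l a b u v j τ)).toReal)
    (fun τ => mul_nonneg (by norm_num) (hφ0 τ))
    (fun τ _ => hS0 τ)
    (hφ_int.const_mul 30)
    hgS_int
    hkey

end system

/-- uniqueness of the Leray-Hopf solution to the dyadic MHD model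
with forward and backward energy cascade when `0 < θ ≤ 2`: any two Leray-Hopf
solutions with the same `l²` initial data and the same forcing
`f ∈ L²(0,T; H^{-1})` coincide on `[0,T]`. -/
theorem uniqueness_LerayHopf_dyadic_MHD_fb
    (l θ T : ℝ) (hl : 1 < l) (hθ1 : 0 < θ) (hθ2 : θ ≤ 2) (hT : 0 < T)
    (a0 b0 : ℕ → ℝ)
    (ha0 : Summable fun j => (a0 j) ^ 2) (hb0 : Summable fun j => (b0 j) ^ 2)
    (f : ℕ → ℝ → ℝ)
    (hfi : ∀ j, IntervalIntegrable (fun t => (f j t) ^ 2) volume 0 T)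
    (hf : Summable fun j => lamPow l j (-2) * ∫ t in (0:ℝ)..T, (f j t) ^ 2)
    (a b u v : ℕ → ℝ → ℝ)
    (hab : IsLerayHopfFB l θ T f a b)
    (huv : IsLerayHopfFB l θ T f u v)
    (hinita : ∀ j, a j 0 = a0 j) (hinitb : ∀ j, b j 0 = b0 j)
    (hinitu : ∀ j, u j 0 = a0 j) (hinitv : ∀ j, v j 0 = b0 j) :
    ∀ j, ∀ t ∈ Icc 0 T, a j t = u j t ∧ b j t = v j t := by
  have hinit' : ∀ j, a j 0 = u j 0 ∧ b j 0 = v j 0 := fun j =>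
    ⟨by rw [hinita j, hinitu j], by rw [hinitb j, hinitv j]⟩
  have hzero := mhd_S_zero hl hθ2 hT hab huv hinit'
  intro j t ht
  have haS := hab.1.2.2.1 t ht
  have hbS := hab.1.2.2.2.1 t ht
  have huS := huv.1.2.2.1 t ht
  have hvS := huv.1.2.2.2.1 t ht
  have he0 : ∀ i, 0 ≤ mhd_e a b u v i t := fun i => add_nonneg (sq_nonneg _) (sq_nonneg _)
  have he_s : Summable (fun i => mhd_e a b u v i t) := by
    have hmaj : Summable (fun i => 2*(a i t)^2 + 2*(u i t)^2 + (2*(b i t)^2 + 2*(v i t)^2)) :=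
      ((haS.mul_left 2).add (huS.mul_left 2)).add
        ((hbS.mul_left 2).add (hvS.mul_left 2))
    refine Summable.of_nonneg_of_le he0 (fun i => ?_) hmaj
    simp only [mhd_e]
    linarith [mhd_two' (a i t) (u i t), mhd_two' (b i t) (v i t)]
  have hle := Summable.le_tsum he_s j (fun i _ => he0 i)
  rw [hzero t ht] at hle
  have hee : mhd_e a b u v j t = 0 := le_antisymm hle (he0 j)
  simp only [mhd_e] at hee
  have h1 : (a j t - u j t) ^ 2 = 0 := by
    nlinarith [sq_nonneg (a j t - u j t), sq_nonneg (b j t - v j t)]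
  have h2 : (b j t - v j t) ^ 2 = 0 := by
    nlinarith [sq_nonneg (a j t - u j t), sq_nonneg (b j t - v j t)]
  constructor
  · exact sub_eq_zero.mp (pow_eq_zero_iff two_ne_zero |>.mp h1)
  · exact sub_eq_zero.mp (pow_eq_zero_iff two_ne_zero |>.mp h2)
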